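/- arXiv:2011.12098 — 5 statements merged into one kernel-verified Lean document; each statement's English description precedes it below -/
import Mathlib

section
/- Let U and V be real Hilbert spaces, b : U × V → ℝ a bounded bilinear form, and Θ : U → V the trial-to-test operator, i.e. the (unique) map satisfying ⟪Θz, v⟫_V = b(z, v) for all z ∈ U and v ∈ V. Let L : V → ℝ be a continuous linear functional with Riesz representative ℓ ∈ V, let U_h ⊆ U be a subspace, and let u_h ∈ U_h. Then the following are equivalent: (i) b(u_h, Θw) = L(Θw) for all w ∈ U_h; (ii) ‖Θ u_h − ℓ‖_V ≤ ‖Θ w − ℓ‖_V for all w ∈ U_h. -/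
open RealInnerProductSpace

/-- The DPG method with optimal test functions (Galerkin scheme tested with `Θ(U_h)`)
is exactly the minimum residual method: `b(u_h, Θw) = L(Θw)` for all `w ∈ U_h` iff
`‖Θu_h − ℓ‖ ≤ ‖Θw − ℓ‖` for all `w ∈ U_h`, where `ℓ` is the Riesz representative of `L`
and `Θ` is the trial-to-test operator, `⟪Θz, v⟫ = b(z, v)`. -/
theorem stmt2 {U V : Type*}
    [NormedAddCommGroup U] [InnerProductSpace ℝ U] [CompleteSpace U]
    [NormedAddCommGroup V] [InnerProductSpace ℝ V] [CompleteSpace V]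
    (b : U →ₗ[ℝ] V →ₗ[ℝ] ℝ) (Cb : ℝ) (hb : ∀ (z : U) (v : V), |b z v| ≤ Cb * ‖z‖ * ‖v‖)
    (Θ : U → V) (hΘ : ∀ (z : U) (v : V), ⟪Θ z, v⟫ = b z v)
    (L : V →L[ℝ] ℝ) (ℓ : V) (hℓ : ∀ v : V, L v = ⟪ℓ, v⟫)
    (Uh : Submodule ℝ U) (uh : U) (huh : uh ∈ Uh) :
    (∀ w ∈ Uh, b uh (Θ w) = L (Θ w)) ↔ (∀ w ∈ Uh, ‖Θ uh - ℓ‖ ≤ ‖Θ w - ℓ‖) := by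
  set e : V := Θ uh - ℓ with he
  -- Θ is additive / homogeneous, by uniqueness of inner-product representation
  have hΘadd : ∀ (z z' : U) (t : ℝ), Θ (z + t • z') = Θ z + t • Θ z' := by
    intro z z' t
    apply ext_inner_right ℝ
    intro v
    rw [inner_add_left, real_inner_smul_left, hΘ, hΘ, hΘ, map_add, map_smul]
    simp
  -- Galerkin condition is orthogonality of the residual
  have hgal : ∀ w, (b uh (Θ w) = L (Θ w)) ↔ ⟪e, Θ w⟫ = 0 := by
    intro w
    rw [he, inner_sub_left, hΘ, hℓ, sub_eq_zero, eq_comm]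
  constructor
  · intro h w hw
    have h1 : ⟪e, Θ w⟫ = 0 := (hgal w).mp (h w hw)
    have h2 : ⟪e, Θ uh⟫ = 0 := (hgal uh).mp (h uh huh)
    have key : Θ w - ℓ = e + (Θ w - Θ uh) := by rw [he]; abel
    have hsq : ‖Θ w - ℓ‖ ^ 2 = ‖e‖ ^ 2 + ‖Θ w - Θ uh‖ ^ 2 := by
      rw [key, norm_add_sq_real, inner_sub_right, h1, h2]
      ring
    have hle : ‖e‖ ^ 2 ≤ ‖Θ w - ℓ‖ ^ 2 := by nlinarith [sq_nonneg ‖Θ w - Θ uh‖]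
    nlinarith [norm_nonneg e, norm_nonneg (Θ w - ℓ)]
  · intro h w hw
    rw [hgal]
    set c : ℝ := ⟪e, Θ w⟫ with hc
    set n : ℝ := ‖Θ w‖ ^ 2 with hn
    have hn0 : 0 ≤ n := sq_nonneg _
    -- test with uh + t • w for t = -c/(n+1)
    set t : ℝ := -c / (n + 1) with ht
    have hmem : uh + t • w ∈ Uh := Uh.add_mem huh (Uh.smul_mem _ hw)
    have hle := h _ hmem
    have hexp : Θ (uh + t • w) - ℓ = e + t • Θ w := by rw [hΘadd, he]; abel
    have hsq : ‖Θ (uh + t • w) - ℓ‖ ^ 2 = ‖e‖ ^ 2 + 2 * t * c + t ^ 2 * n := by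
      rw [hexp, norm_add_sq_real, real_inner_smul_right, norm_smul]
      simp [hn, mul_pow]
      ring
    have h2 : ‖e‖ ^ 2 ≤ ‖Θ (uh + t • w) - ℓ‖ ^ 2 := by
      have := h _ hmem
      nlinarith [norm_nonneg e, norm_nonneg (Θ (uh + t • w) - ℓ)]
    rw [hsq] at h2
    have hne : (0:ℝ) < n + 1 := by linarith
    have hpos : 0 ≤ 2 * t * c + t ^ 2 * n := by linarith
    have h4 : 2 * t * c + t ^ 2 * n = -(c ^ 2 * (n + 2)) / (n + 1) ^ 2 := by
      rw [ht]; field_simp; ring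
    rw [h4] at hpos
    have h5 := mul_nonneg hpos (sq_nonneg (n + 1))
    have h6 : -(c ^ 2 * (n + 2)) / (n + 1) ^ 2 * (n + 1) ^ 2 = -(c ^ 2 * (n + 2)) := by
      field_simp
    rw [h6] at h5
    have hc0 : c = 0 := by nlinarith [sq_nonneg c]
    exact hc0
end

section
/- Let H and K be real inner product spaces and d > 0. Let v, g₁ ∈ H and w, g₂ ∈ K satisfy ‖v‖ ≤ d·‖w‖ and ‖w‖² = ⟪g₂, w⟫ + ⟪g₁, v⟫. Then d⁻²·‖v‖² + ‖w‖² + ‖g₂ − w‖² + d²·‖g₁‖² ≤ (3 + 2√2)·(d²·‖g₁‖² + ‖g₂‖²). -/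
open RealInnerProductSpace

/-- Abstract form of the full scaled adjoint stability bound in the proof of Theorem 2.3:
with `w = ∇v` and adjoint flux `τ = g₂ − w` (so that `div τ = g₁`),
`d⁻²‖v‖² + ‖w‖² + ‖g₂ − w‖² + d²‖g₁‖² ≤ (3 + 2√2)(d²‖g₁‖² + ‖g₂‖²)`. -/
theorem stmt6 {H K : Type*}
    [NormedAddCommGroup H] [InnerProductSpace ℝ H]
    [NormedAddCommGroup K] [InnerProductSpace ℝ K]
    (d : ℝ) (hd : 0 < d) (v g₁ : H) (w g₂ : K)
    (hP : ‖v‖ ≤ d * ‖w‖) (hW : ‖w‖ ^ 2 = ⟪g₂, w⟫ + ⟪g₁, v⟫) :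
    (d ^ 2)⁻¹ * ‖v‖ ^ 2 + ‖w‖ ^ 2 + ‖g₂ - w‖ ^ 2 + d ^ 2 * ‖g₁‖ ^ 2 ≤
      (3 + 2 * Real.sqrt 2) * (d ^ 2 * ‖g₁‖ ^ 2 + ‖g₂‖ ^ 2) := by
  have h1 : ⟪g₂, w⟫ ≤ ‖g₂‖ * ‖w‖ := real_inner_le_norm _ _
  have h2 : ⟪g₁, v⟫ ≤ ‖g₁‖ * ‖v‖ := real_inner_le_norm _ _
  have hexp : ‖g₂ - w‖ ^ 2 = ‖g₂‖ ^ 2 - 2 * ⟪g₂, w⟫ + ‖w‖ ^ 2 := by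
    rw [@norm_sub_sq_real K]
  have hs : Real.sqrt 2 ^ 2 = 2 := Real.sq_sqrt (by norm_num)
  have hs1 : (1:ℝ) ≤ Real.sqrt 2 := by
    nlinarith [Real.sqrt_nonneg 2]
  have hfirst : (d ^ 2)⁻¹ * ‖v‖ ^ 2 ≤ ‖w‖ ^ 2 := by
    rw [inv_mul_le_iff₀ (by positivity)]
    nlinarith [norm_nonneg v, norm_nonneg w]
  have hA : ‖w‖ ≤ ‖g₂‖ + d * ‖g₁‖ := by
    rcases eq_or_lt_of_le (norm_nonneg w) with h | h
    · nlinarith [norm_nonneg g₂, norm_nonneg g₁]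
    · have : ‖w‖ ^ 2 ≤ ‖g₂‖ * ‖w‖ + ‖g₁‖ * (d * ‖w‖) := by
        nlinarith [norm_nonneg g₁]
      nlinarith
  have hip : ⟪g₁, v⟫ ≤ d * ‖g₁‖ * ‖w‖ := by
    nlinarith [norm_nonneg g₁]
  have hkey : (d ^ 2)⁻¹ * ‖v‖ ^ 2 + ‖w‖ ^ 2 + ‖g₂ - w‖ ^ 2 + d ^ 2 * ‖g₁‖ ^ 2 ≤
      (‖w‖ + d * ‖g₁‖) ^ 2 + ‖g₂‖ ^ 2 := by nlinarith
  have hsum : (‖w‖ + d * ‖g₁‖) ^ 2 ≤ (‖g₂‖ + 2 * (d * ‖g₁‖)) ^ 2 := by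
    have h0 : 0 ≤ ‖w‖ + d * ‖g₁‖ := by positivity
    nlinarith [mul_nonneg hd.le (norm_nonneg g₁)]
  nlinarith [sq_nonneg (2 * (d * ‖g₁‖) - (1 + 2 * Real.sqrt 2) * ‖g₂‖),
    sq_nonneg (d * ‖g₁‖), sq_nonneg ‖g₂‖, hs, hs1,
    mul_nonneg (mul_nonneg hd.le (norm_nonneg g₁)) (norm_nonneg g₂)]
end

section
/- Let H and K be real inner product spaces, d > 0, and let 𝒞 : K → K be a linear map with ⟪𝒞Q, P⟫ = ⟪Q, 𝒞P⟫ for all Q, P ∈ K, and constants 0 < c₁ ≤ c₂ such that c₁·‖Q‖² ≤ ⟪𝒞Q, Q⟫ and ‖𝒞Q‖ ≤ c₂·‖Q‖ for all Q ∈ K. Let v, g₁ ∈ H and W, G₂ ∈ K satisfy ‖v‖ ≤ d²·‖W‖ and ⟪𝒞W, W⟫ = ⟪𝒞G₂, W⟫ − ⟪g₁, v⟫. Then d⁻⁴·‖v‖² + ‖W‖² ≤ (4·max(c₂,1)²/c₁²)·(d⁴·‖g₁‖² + ‖G₂‖²). -/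
open RealInnerProductSpace

/-- Abstract form of the scaled adjoint stability bound (3.18) for the Kirchhoff–Love
plate: with a symmetric, coercive, bounded material tensor `𝒞`, the Poincaré-type
estimate `‖v‖ ≤ d²‖W‖` and the tested reduced weak formulation
`⟪𝒞W, W⟫ = ⟪𝒞G₂, W⟫ − ⟪g₁, v⟫` imply
`d⁻⁴‖v‖² + ‖W‖² ≤ (4·max(c₂,1)²/c₁²)(d⁴‖g₁‖² + ‖G₂‖²)`. -/
theorem stmt8 {H K : Type*}
    [NormedAddCommGroup H] [InnerProductSpace ℝ H]
    [NormedAddCommGroup K] [InnerProductSpace ℝ K]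
    (d : ℝ) (hd : 0 < d)
    (𝒞 : K →ₗ[ℝ] K) (hsym : ∀ Q P : K, ⟪𝒞 Q, P⟫ = ⟪Q, 𝒞 P⟫)
    (c₁ c₂ : ℝ) (hc₁ : 0 < c₁) (hc₁₂ : c₁ ≤ c₂)
    (hcoer : ∀ Q : K, c₁ * ‖Q‖ ^ 2 ≤ ⟪𝒞 Q, Q⟫)
    (hbdd : ∀ Q : K, ‖𝒞 Q‖ ≤ c₂ * ‖Q‖)
    (v g₁ : H) (W G₂ : K)
    (hP : ‖v‖ ≤ d ^ 2 * ‖W‖)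
    (hW : ⟪𝒞 W, W⟫ = ⟪𝒞 G₂, W⟫ - ⟪g₁, v⟫) :
    (d ^ 4)⁻¹ * ‖v‖ ^ 2 + ‖W‖ ^ 2 ≤
      4 * max c₂ 1 ^ 2 / c₁ ^ 2 * (d ^ 4 * ‖g₁‖ ^ 2 + ‖G₂‖ ^ 2) := by

  have hd4 : (0:ℝ) < d ^ 4 := by positivity
  have hM : c₂ ≤ max c₂ 1 := le_max_left _ _
  have hM1 : (1:ℝ) ≤ max c₂ 1 := le_max_right _ _
  have hc₂ : (0:ℝ) < c₂ := lt_of_lt_of_le hc₁ hc₁₂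
  -- key inequality
  have h1 : ⟪𝒞 G₂, W⟫ ≤ c₂ * ‖G₂‖ * ‖W‖ := by
    calc ⟪𝒞 G₂, W⟫ ≤ ‖𝒞 G₂‖ * ‖W‖ := real_inner_le_norm _ _
    _ ≤ c₂ * ‖G₂‖ * ‖W‖ := by
        have := hbdd G₂
        nlinarith [norm_nonneg W]
  have h2 : -⟪g₁, v⟫ ≤ ‖g₁‖ * (d ^ 2 * ‖W‖) := by
    calc -⟪g₁, v⟫ ≤ ‖g₁‖ * ‖v‖ := by
          have := abs_real_inner_le_norm g₁ v
          have := neg_abs_le ⟪g₁, v⟫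
          linarith
    _ ≤ ‖g₁‖ * (d ^ 2 * ‖W‖) := by
        have := norm_nonneg g₁; nlinarith
  have hkey : c₁ * ‖W‖ ^ 2 ≤ (c₂ * ‖G₂‖ + d ^ 2 * ‖g₁‖) * ‖W‖ := by
    have := hcoer W
    rw [hW] at this
    nlinarith
  have hW2 : c₁ * ‖W‖ ≤ c₂ * ‖G₂‖ + d ^ 2 * ‖g₁‖ := by
    rcases eq_or_lt_of_le (norm_nonneg W) with h0 | h0
    · rw [← h0, mul_zero]; positivity
    · have := mul_le_mul_of_nonneg_right (le_of_lt h0) (le_refl (0:ℝ))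
      nlinarith
  have hv2 : (d ^ 4)⁻¹ * ‖v‖ ^ 2 ≤ ‖W‖ ^ 2 := by
    rw [inv_mul_le_iff₀ hd4]
    nlinarith [norm_nonneg v, norm_nonneg W]
  have hfinal : 2 * ‖W‖ ^ 2 ≤ 4 * max c₂ 1 ^ 2 / c₁ ^ 2 * (d ^ 4 * ‖g₁‖ ^ 2 + ‖G₂‖ ^ 2) := by
    rw [div_mul_eq_mul_div, le_div_iff₀ (by positivity : (0:ℝ) < c₁ ^ 2)]
    nlinarith [sq_nonneg (c₂ * ‖G₂‖ - d ^ 2 * ‖g₁‖), sq_nonneg (c₁ * ‖W‖),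
      mul_le_mul hW2 hW2 (by positivity) (by positivity : (0:ℝ) ≤ c₂ * ‖G₂‖ + d ^ 2 * ‖g₁‖),
      mul_le_mul hM hM hc₂.le (by linarith : (0:ℝ) ≤ max c₂ 1),
      mul_le_mul hM1 hM1 zero_le_one (by linarith : (0:ℝ) ≤ max c₂ 1),
      norm_nonneg G₂, norm_nonneg g₁, sq_nonneg (d ^ 2 * ‖g₁‖), sq_nonneg ‖G₂‖]
  linarith
end

section
/- Let U and V be real normed spaces and b : U × V → ℝ a bilinear form with |b(z, v)| ≤ C·‖z‖·‖v‖ for all z ∈ U, v ∈ V, and with c·‖z‖ ≤ sup { b(z, v)/‖v‖ : v ∈ V, v ≠ 0 } for all z ∈ U, where c, C > 0. Let U_h ⊆ U and V_h ⊆ V be subspaces and Π : V → V_h a linear map with ‖Π v‖ ≤ C_F·‖v‖ for all v ∈ V and b(w, v − Π v) = 0 for all w ∈ U_h, v ∈ V. Fix u ∈ U and define the discrete residual R_h(w) := sup { b(u − w, v_h)/‖v_h‖ : v_h ∈ V_h, v_h ≠ 0 } for w ∈ U_h. If u_h ∈ U_h satisfies R_h(u_h) ≤ R_h(w) for all w ∈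 U_h, then ‖u − u_h‖ ≤ (1 + 2·C·C_F/c) · inf { ‖u − w‖ : w ∈ U_h }. -/
/-- Quasi-optimal convergence of the fully discrete ('practical') DPG method: if `b` is
bounded and satisfies the (continuous) inf-sup condition with constant `c`, and there is a
Fortin operator `Pf : V → V_h` with norm bound `C_F` and `b(w, v − Pf v) = 0` for `w ∈ U_h`,
then the minimizer `u_h` of the discrete residual
`R_h(w) = sup { b(u − w, v_h)/‖v_h‖ : v_h ∈ V_h, v_h ≠ 0 }` over `U_h` satisfies
`‖u − u_h‖ ≤ (1 + 2·C·C_F/c) · inf { ‖u − w‖ : w ∈ U_h }`. -/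
theorem stmt10 {U V : Type*} [NormedAddCommGroup U] [NormedSpace ℝ U]
    [NormedAddCommGroup V] [NormedSpace ℝ V]
    (b : U →ₗ[ℝ] V →ₗ[ℝ] ℝ) (c C CF : ℝ) (hc : 0 < c) (hC : 0 < C) (hCF : 0 < CF)
    (hb : ∀ (z : U) (v : V), |b z v| ≤ C * ‖z‖ * ‖v‖)
    (hinfsup : ∀ z : U, c * ‖z‖ ≤ ⨆ v : {v : V // v ≠ 0}, b z (v : V) / ‖(v : V)‖)
    (Uh : Submodule ℝ U) (Vh : Submodule ℝ V)
    (Pf : V →ₗ[ℝ] Vh)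
    (hbound : ∀ v : V, ‖(Pf v : V)‖ ≤ CF * ‖v‖)
    (horth : ∀ w ∈ Uh, ∀ v : V, b w (v - (Pf v : V)) = 0)
    (u uh : U) (huh : uh ∈ Uh)
    (hmin : ∀ w ∈ Uh,
      (⨆ vh : {vh : Vh // vh ≠ 0}, b (u - uh) ((vh : Vh) : V) / ‖((vh : Vh) : V)‖) ≤
      ⨆ vh : {vh : Vh // vh ≠ 0}, b (u - w) ((vh : Vh) : V) / ‖((vh : Vh) : V)‖) :
    ‖u - uh‖ ≤ (1 + 2 * C * CF / c) * ⨅ w : Uh, ‖u - (w : U)‖ := by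
  have hUhne : Nonempty Uh := ⟨0⟩
  set K : ℝ := 2 * C * CF / c with hKdef
  have hKpos : 0 < 1 + K := by positivity
  -- quotient term bound over Vh
  have hterm : ∀ z : U, ∀ vh : {vh : Vh // vh ≠ 0},
      b z ((vh : Vh) : V) / ‖((vh : Vh) : V)‖ ≤ C * ‖z‖ := by
    intro z vh
    have hv0 : ((vh : Vh) : V) ≠ 0 := by
      intro h; exact vh.2 (Subtype.ext h)
    have hvpos : 0 < ‖((vh : Vh) : V)‖ := norm_pos_iff.mpr hv0
    rw [div_le_iff₀ hvpos]
    exact le_trans (le_abs_self _) (hb z _)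
  -- key estimate for each w ∈ Uh
  have key : ∀ w : Uh, ‖u - uh‖ ≤ (1 + K) * ‖u - (w : U)‖ := by
    intro w
    have hw : (w : U) ∈ Uh := w.2
    have hnn : (0 : ℝ) ≤ C * ‖u - (w : U)‖ := by positivity
    -- R_h(uh) ≤ R_h(w) ≤ C‖u - w‖
    have hRw : (⨆ vh : {vh : Vh // vh ≠ 0}, b (u - (w : U)) ((vh : Vh) : V) / ‖((vh : Vh) : V)‖)
        ≤ C * ‖u - (w : U)‖ := Real.iSup_le (fun vh => hterm _ vh) hnn
    have hRuh : (⨆ vh : {vh : Vh // vh ≠ 0}, b (u - uh) ((vh : Vh) : V) / ‖((vh : Vh) : V)‖)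
        ≤ C * ‖u - (w : U)‖ := le_trans (hmin _ hw) hRw
    have hbdd : BddAbove (Set.range fun vh : {vh : Vh // vh ≠ 0} =>
        b (u - uh) ((vh : Vh) : V) / ‖((vh : Vh) : V)‖) :=
      ⟨C * ‖u - uh‖, by rintro x ⟨vh, rfl⟩; exact hterm _ vh⟩
    set z : U := (w : U) - uh with hzdef
    have hz : z ∈ Uh := Uh.sub_mem hw huh
    have hsup : ∀ v : {v : V // v ≠ 0},
        b z (v : V) / ‖(v : V)‖ ≤ 2 * C * CF * ‖u - (w : U)‖ := by
      intro v
      have hv0 : (v : V) ≠ 0 := v.2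
      have hvpos : 0 < ‖(v : V)‖ := norm_pos_iff.mpr hv0
      set p : Vh := Pf (v : V) with hpdef
      have h1 : b z (v : V) = b z (p : V) := by
        have := horth z hz (v : V)
        rw [map_sub] at this
        linarith
      have hsplit : b z (p : V) = b (u - uh) (p : V) - b (u - (w : U)) (p : V) := by
        simp only [hzdef, map_sub, LinearMap.sub_apply]
        ring
      have hpnorm : ‖(p : V)‖ ≤ CF * ‖(v : V)‖ := hbound _
      -- bound b (u - uh) p
      have hA : b (u - uh) (p : V) ≤ C * ‖u - (w : U)‖ * (CF * ‖(v : V)‖) := by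
        by_cases hp : p = 0
        · rw [hp]
          simp only [Submodule.coe_zero, map_zero]
          positivity
        · have hppos : 0 < ‖(p : V)‖ :=
            norm_pos_iff.mpr (fun h => hp (Subtype.ext h))
          have hle : b (u - uh) (p : V) / ‖(p : V)‖ ≤ C * ‖u - (w : U)‖ :=
            le_trans (le_ciSup hbdd (⟨p, hp⟩ : {vh : Vh // vh ≠ 0})) hRuh
          have := (div_le_iff₀ hppos).mp hle
          calc b (u - uh) (p : V) ≤ C * ‖u - (w : U)‖ * ‖(p : V)‖ := this
            _ ≤ C * ‖u - (w : U)‖ * (CF * ‖(v : V)‖) := by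
                exact mul_le_mul_of_nonneg_left hpnorm hnn
      -- bound - b (u - w) p
      have hB : -(b (u - (w : U)) (p : V)) ≤ C * ‖u - (w : U)‖ * (CF * ‖(v : V)‖) := by
        have h1 := hb (u - (w : U)) (p : V)
        have h2 : -(b (u - (w : U)) (p : V)) ≤ C * ‖u - (w : U)‖ * ‖(p : V)‖ :=
          le_trans (neg_le_abs _) h1
        calc -(b (u - (w : U)) (p : V)) ≤ C * ‖u - (w : U)‖ * ‖(p : V)‖ := h2
          _ ≤ C * ‖u - (w : U)‖ * (CF * ‖(v : V)‖) := mul_le_mul_of_nonneg_left hpnorm hnn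
      have hall : b z (v : V) ≤ 2 * C * CF * ‖u - (w : U)‖ * ‖(v : V)‖ := by
        rw [h1, hsplit]
        nlinarith [hA, hB]
      rw [div_le_iff₀ hvpos]
      exact hall
    have hiSup : (⨆ v : {v : V // v ≠ 0}, b z (v : V) / ‖(v : V)‖)
        ≤ 2 * C * CF * ‖u - (w : U)‖ := Real.iSup_le hsup (by positivity)
    have hcz : c * ‖z‖ ≤ 2 * C * CF * ‖u - (w : U)‖ := le_trans (hinfsup z) hiSup
    have hznorm : ‖z‖ ≤ K * ‖u - (w : U)‖ := by
      rw [hKdef]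
      rw [div_mul_eq_mul_div, le_div_iff₀ hc, mul_comm ‖z‖ c]
      linarith
    have htri : ‖u - uh‖ ≤ ‖u - (w : U)‖ + ‖z‖ := by
      have : u - uh = (u - (w : U)) + z := by rw [hzdef]; abel
      rw [this]
      exact norm_add_le _ _
    nlinarith [htri, hznorm]
  rw [← div_le_iff₀' hKpos]
  refine le_ciInf fun w => ?_
  rw [div_le_iff₀' hKpos]
  exact key w
end

section
/- Let R₁, R₂ > 0 and let v : ℝ² → ℝ be twice continuously differentiable with support contained in [0, R₁] × [0, R₂]. Then (∫_{ℝ²} v(x)² dx)^{1/2} ≤ min(R₁, R₂)² · (∫_{ℝ²} ‖D²v(x)‖² dx)^{1/2}, where D²v(x) denotes the second derivative of v at x (a continuous bilinear map on ℝ²) and ‖D²v(x)‖ its operator norm. -/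
section PoincareAux
open MeasureTheory Set Function


lemma sq_support_subset {α : Type*} {f : α → ℝ} {s : Set α} (h : support f ⊆ s) :
    support (fun t => f t ^ 2) ⊆ s := fun t ht => h (by
      simp only [mem_support] at ht ⊢; exact fun h0 => ht (by rw [h0]; ring))

lemma poincare1d {R : ℝ} (hR : 0 < R) (f : ℝ → ℝ) (hf : ContDiff ℝ 1 f)
    (hs : support f ⊆ Icc 0 R) :
    ∫ t, f t ^ 2 ≤ R ^ 2 * ∫ t, deriv f t ^ 2 := by
  have hts : tsupport f ⊆ Icc 0 R := closure_minimal hs isClosed_Icc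
  have hds : support (deriv f) ⊆ Icc 0 R := (support_deriv_subset).trans hts
  have hfc : Continuous f := hf.continuous
  have hdc : Continuous (deriv f) := hf.continuous_deriv le_rfl
  have hint2 : Integrable (fun t => f t ^ 2) := by
    exact ((hfc.pow 2).integrable_of_hasCompactSupport
      (HasCompactSupport.of_support_subset_isCompact isCompact_Icc (sq_support_subset hs)))
  have hintd2 : Integrable (fun t => deriv f t ^ 2) := by
    exact ((hdc.pow 2).integrable_of_hasCompactSupport
      (HasCompactSupport.of_support_subset_isCompact isCompact_Icc (sq_support_subset hds)))
  have hintd : Integrable (fun t => |deriv f t|) := by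
    exact (hdc.abs.integrable_of_hasCompactSupport
      (HasCompactSupport.of_support_subset_isCompact isCompact_Icc (fun t ht => hds (by
        simp only [mem_support] at ht ⊢; exact fun h0 => ht (by rw [h0, abs_zero])))))
  set I : ℝ := ∫ t, deriv f t ^ 2 with hI
  have hI0 : 0 ≤ I := integral_nonneg fun t => sq_nonneg _
  -- Cauchy-Schwarz : ∫ |deriv f| ≤ √R * √I
  have hCS : ∫ t, |deriv f t| ≤ Real.sqrt R * Real.sqrt I := by
    have hrestr : ∫ t, |deriv f t| = ∫ t in Icc 0 R, |deriv f t| := by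
      exact (setIntegral_eq_integral_of_forall_compl_eq_zero fun t ht => by
        by_contra h
        exact ht (hds (by simpa [abs_eq_zero] using h))).symm
    rw [hrestr]
    have hfin : IsFiniteMeasure (volume.restrict (Icc (0:ℝ) R)) := by
      constructor
      rw [Measure.restrict_apply_univ, Real.volume_Icc]
      exact ENNReal.ofReal_lt_top
    have hconj : Real.HolderConjugate 2 2 := by rw [Real.holderConjugate_iff]; norm_num
    have h1 : MemLp (fun _ : ℝ => (1:ℝ)) (ENNReal.ofReal 2) (volume.restrict (Icc 0 R)) := by
      exact memLp_const 1
    have h2 : MemLp (fun t => |deriv f t|) (ENNReal.ofReal 2) (volume.restrict (Icc 0 R)) := by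
      have : (ENNReal.ofReal 2) = 2 := by norm_num
      rw [this]
      apply (memLp_two_iff_integrable_sq (hdc.abs.aestronglyMeasurable)).2
      have : (fun t => |deriv f t| ^ 2) = fun t => deriv f t ^ 2 := by
        funext t; rw [sq_abs]
      rw [this]
      exact hintd2.integrableOn
    have key := integral_mul_le_Lp_mul_Lq_of_nonneg hconj
      (Filter.Eventually.of_forall fun _ => zero_le_one)
      (Filter.Eventually.of_forall fun t => abs_nonneg (deriv f t)) h1 h2
    simp only [one_mul] at key
    refine key.trans ?_
    have e1 : ∫ t in Icc (0:ℝ) R, (1:ℝ) ^ (2:ℝ) = R := by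
      simp [Real.volume_Icc, ENNReal.toReal_ofReal hR.le, hR.le]
    have e2 : ∫ t in Icc (0:ℝ) R, |deriv f t| ^ (2:ℝ) = ∫ t in Icc 0 R, deriv f t ^ 2 := by
      apply setIntegral_congr_fun measurableSet_Icc
      intro t _
      beta_reduce
      rw [show ((2:ℝ)) = ((2:ℕ):ℝ) by norm_num, Real.rpow_natCast, sq_abs]
    rw [e1, e2]
    gcongr
    · rw [Real.sqrt_eq_rpow]
    · rw [← Real.sqrt_eq_rpow]
      apply Real.sqrt_le_sqrt
      exact setIntegral_le_integral hintd2 (Filter.Eventually.of_forall fun t => sq_nonneg _)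
  -- pointwise bound
  have hpt : ∀ t, f t ^ 2 ≤ R * I := by
    intro t
    rcases eq_or_ne (f t) 0 with h0 | h0
    · rw [h0]; simp only [ne_eq, OfNat.ofNat_ne_zero, not_false_eq_true, zero_pow]; positivity
    have htIcc : t ∈ Icc 0 R := hs h0
    have hft : f t = ∫ s in (-1)..t, deriv f s := by
      have : f t - f (-1) = ∫ s in (-1)..t, deriv f s := by
        rw [intervalIntegral.integral_deriv_eq_sub (fun s _ => (hf.differentiable one_ne_zero) s)
          (hdc.intervalIntegrable _ _)]
      have hfm1 : f (-1) = 0 := by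
        by_contra h
        have := hs h
        simp only [mem_Icc] at this; linarith
      linarith
    have habs : |f t| ≤ ∫ s, |deriv f s| := by
      rw [hft]
      calc |∫ s in (-1)..t, deriv f s| ≤ ∫ s in (-1)..t, |deriv f s| := by
            exact intervalIntegral.abs_integral_le_integral_abs (by linarith [htIcc.1])
        _ ≤ ∫ s, |deriv f s| := by
            rw [intervalIntegral.integral_of_le (by linarith [htIcc.1])]
            exact setIntegral_le_integral hintd (Filter.Eventually.of_forall fun s => abs_nonneg _)
    calc f t ^ 2 = |f t| ^ 2 := (sq_abs _).symm
      _ ≤ (Real.sqrt R * Real.sqrt I) ^ 2 := by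
          apply pow_le_pow_left₀ (abs_nonneg _) (habs.trans hCS)
      _ = R * I := by
          rw [mul_pow, Real.sq_sqrt hR.le, Real.sq_sqrt hI0]
  -- integrate the pointwise bound over Icc 0 R
  have h1 : ∫ t, f t ^ 2 = ∫ t in Icc 0 R, f t ^ 2 := by
    exact (setIntegral_eq_integral_of_forall_compl_eq_zero fun t ht => by
      by_contra h
      exact ht (sq_support_subset hs h)).symm
  rw [h1]
  calc ∫ t in Icc 0 R, f t ^ 2 ≤ ∫ _t in Icc 0 R, R * I := by
        apply setIntegral_mono_on hint2.integrableOn (integrableOn_const (by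
          rw [Real.volume_Icc]; exact ENNReal.ofReal_ne_top)) measurableSet_Icc
        exact fun t _ => hpt t
    _ = R * (R * I) := by
        rw [setIntegral_const, measureReal_def, Real.volume_Icc, smul_eq_mul, ENNReal.toReal_ofReal (by linarith)]
        ring_nf
    _ = R ^ 2 * I := by ring



noncomputable abbrev ψ2 : EuclideanSpace ℝ (Fin 2) ≃ᵐ ℝ × ℝ :=
  (MeasurableEquiv.toLp 2 (Fin 2 → ℝ)).symm.trans (MeasurableEquiv.piFinTwo fun _ => ℝ)

lemma hψ2 : MeasurePreserving ψ2 volume volume :=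
  (EuclideanSpace.volume_preserving_symm_measurableEquiv_toLp (Fin 2)).trans
    (volume_preserving_piFinTwo fun _ => ℝ)

lemma ψ2_symm_apply_zero (p : ℝ × ℝ) : ψ2.symm p 0 = p.1 := rfl
lemma ψ2_symm_apply_one (p : ℝ × ℝ) : ψ2.symm p 1 = p.2 := rfl

lemma ψ2_symm_eq0 (t y : ℝ) :
    ψ2.symm (t, y) = ψ2.symm (0, y) + t • EuclideanSpace.single 0 (1:ℝ) := by
  ext i
  fin_cases i <;>
    simp [ψ2_symm_apply_zero, ψ2_symm_apply_one, EuclideanSpace.single_apply]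

lemma ψ2_symm_eq1 (t y : ℝ) :
    ψ2.symm (t, y) = ψ2.symm (t, 0) + y • EuclideanSpace.single 1 (1:ℝ) := by
  ext i
  fin_cases i <;>
    simp [ψ2_symm_apply_zero, ψ2_symm_apply_one, EuclideanSpace.single_apply]


lemma key2d {R : ℝ} (hR : 0 < R) (w : EuclideanSpace ℝ (Fin 2) → ℝ)
    (hw : ContDiff ℝ 1 w) (hcpt : HasCompactSupport w) (i : Fin 2)
    (hs : ∀ x, w x ≠ 0 → x i ∈ Icc 0 R) :
    ∫ x, w x ^ 2 ≤ R ^ 2 * ∫ x, (fderiv ℝ w x (EuclideanSpace.single i 1)) ^ 2 := by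
  set e : EuclideanSpace ℝ (Fin 2) := EuclideanSpace.single i 1 with he
  have hwc : Continuous w := hw.continuous
  have hdc : Continuous (fun x => fderiv ℝ w x e) :=
    (ContinuousLinearMap.apply ℝ ℝ e).continuous.comp (hw.continuous_fderiv one_ne_zero)
  have hdsupp : support (fun x => fderiv ℝ w x e) ⊆ tsupport w := fun x hx => by
    by_contra h
    have : fderiv ℝ w x = 0 := by
      by_contra h2
      exact h (support_fderiv_subset ℝ h2)
    simp only [mem_support, this, ContinuousLinearMap.zero_apply, ne_eq, not_true_eq_false] at hx
  have hint2 : Integrable (fun x : EuclideanSpace ℝ (Fin 2) => w x ^ 2) volume :=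
    (hwc.pow 2).integrable_of_hasCompactSupport (HasCompactSupport.of_support_subset_isCompact hcpt (sq_support_subset subset_closure))
  have hintd2 : Integrable (fun x : EuclideanSpace ℝ (Fin 2) => fderiv ℝ w x e ^ 2) volume :=
    (hdc.pow 2).integrable_of_hasCompactSupport
      (HasCompactSupport.of_support_subset_isCompact hcpt (sq_support_subset hdsupp))
  -- transfer to ℝ × ℝ
  have emb : MeasurableEmbedding (ψ2.symm : ℝ × ℝ → EuclideanSpace ℝ (Fin 2)) :=
    ψ2.symm.measurableEmbedding
  have hm : MeasurePreserving (ψ2.symm : ℝ × ℝ → EuclideanSpace ℝ (Fin 2)) volume volume :=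
    hψ2.symm ψ2
  have htrans : ∀ g : EuclideanSpace ℝ (Fin 2) → ℝ,
      ∫ p : ℝ × ℝ, g (ψ2.symm p) = ∫ x, g x := fun g => hm.integral_comp emb g
  have htransInt : ∀ g : EuclideanSpace ℝ (Fin 2) → ℝ, Integrable g volume →
      Integrable (fun p : ℝ × ℝ => g (ψ2.symm p)) volume := fun g hg =>
    (hm.integrable_comp_emb emb).2 hg
  have hG : Integrable (fun p : ℝ × ℝ => w (ψ2.symm p) ^ 2) volume := htransInt _ hint2
  have hH : Integrable (fun p : ℝ × ℝ => fderiv ℝ w (ψ2.symm p) e ^ 2) volume := htransInt _ hintd2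
  rw [← htrans (fun x => w x ^ 2), ← htrans (fun x => fderiv ℝ w x e ^ 2)]
  rw [Measure.volume_eq_prod ℝ ℝ] at hG hH ⊢
  -- slice inequality
  fin_cases i
  · -- i = 0 : inner variable is the first coordinate
    have hslice : ∀ y : ℝ, ∫ t, w (ψ2.symm (t, y)) ^ 2 ≤
        R ^ 2 * ∫ t, fderiv ℝ w (ψ2.symm (t, y)) e ^ 2 := by
      intro y
      set c := ψ2.symm (0, y) with hc
      have heq : ∀ t : ℝ, ψ2.symm (t, y) = c + t • e := fun t => ψ2_symm_eq0 t y
      have hdiff : ∀ t : ℝ, HasDerivAt (fun s => w (c + s • e)) (fderiv ℝ w (c + t • e) e) t := by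
        intro t
        have hinner : HasDerivAt (fun s : ℝ => c + s • e) e t := by
          simpa using ((hasDerivAt_id t).smul_const e).const_add c
        exact ((hw.differentiable one_ne_zero (c + t • e)).hasFDerivAt).comp_hasDerivAt t hinner
      have hsupp : support (fun s => w (c + s • e)) ⊆ Icc 0 R := by
        intro t ht
        have := hs (c + t • e) ht
        rw [← heq] at this
        exact this
      have hcd : ContDiff ℝ 1 (fun s : ℝ => w (c + s • e)) :=
        hw.comp (contDiff_const.add ((contDiff_id (𝕜 := ℝ) (E := ℝ)).smul contDiff_const))
      have := poincare1d hR _ hcd hsupp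
      simp only [heq]
      refine this.trans (le_of_eq ?_)
      congr 1
      apply integral_congr_ae
      filter_upwards with t
      rw [(hdiff t).deriv]
    calc ∫ p, w (ψ2.symm p) ^ 2 ∂(volume.prod volume)
        = ∫ y, ∫ t, w (ψ2.symm (t, y)) ^ 2 := integral_prod_symm _ hG
      _ ≤ ∫ y, R ^ 2 * ∫ t, fderiv ℝ w (ψ2.symm (t, y)) e ^ 2 := by
          apply integral_mono (hG.swap.integral_prod_left) ((hH.swap.integral_prod_left).const_mul _)
          exact hslice
      _ = R ^ 2 * ∫ y, ∫ t, fderiv ℝ w (ψ2.symm (t, y)) e ^ 2 := integral_const_mul _ _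
      _ = R ^ 2 * ∫ p, fderiv ℝ w (ψ2.symm p) e ^ 2 ∂(volume.prod volume) := by
          rw [← integral_prod_symm _ hH]
  · -- i = 1 : inner variable is the second coordinate
    have hslice : ∀ t : ℝ, ∫ y, w (ψ2.symm (t, y)) ^ 2 ≤
        R ^ 2 * ∫ y, fderiv ℝ w (ψ2.symm (t, y)) e ^ 2 := by
      intro t
      set c := ψ2.symm (t, 0) with hc
      have heq : ∀ y : ℝ, ψ2.symm (t, y) = c + y • e := fun y => ψ2_symm_eq1 t y
      have hdiff : ∀ y : ℝ, HasDerivAt (fun s => w (c + s • e)) (fderiv ℝ w (c + y • e) e) y := by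
        intro y
        have hinner : HasDerivAt (fun s : ℝ => c + s • e) e y := by
          simpa using ((hasDerivAt_id y).smul_const e).const_add c
        exact ((hw.differentiable one_ne_zero (c + y • e)).hasFDerivAt).comp_hasDerivAt y hinner
      have hsupp : support (fun s => w (c + s • e)) ⊆ Icc 0 R := by
        intro y hy
        have := hs (c + y • e) hy
        rw [← heq] at this
        exact this
      have hcd : ContDiff ℝ 1 (fun s : ℝ => w (c + s • e)) :=
        hw.comp (contDiff_const.add ((contDiff_id (𝕜 := ℝ) (E := ℝ)).smul contDiff_const))
      have := poincare1d hR _ hcd hsupp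
      simp only [heq]
      refine this.trans (le_of_eq ?_)
      congr 1
      apply integral_congr_ae
      filter_upwards with y
      rw [(hdiff y).deriv]
    calc ∫ p, w (ψ2.symm p) ^ 2 ∂(volume.prod volume)
        = ∫ t, ∫ y, w (ψ2.symm (t, y)) ^ 2 := integral_prod _ hG
      _ ≤ ∫ t, R ^ 2 * ∫ y, fderiv ℝ w (ψ2.symm (t, y)) e ^ 2 := by
          apply integral_mono (hG.integral_prod_left) ((hH.integral_prod_left).const_mul _)
          exact hslice
      _ = R ^ 2 * ∫ t, ∫ y, fderiv ℝ w (ψ2.symm (t, y)) e ^ 2 := integral_const_mul _ _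
      _ = R ^ 2 * ∫ p, fderiv ℝ w (ψ2.symm p) e ^ 2 ∂(volume.prod volume) := by
          rw [← integral_prod _ hH]




lemma main_aux {R : ℝ} (hR : 0 < R) (v : EuclideanSpace ℝ (Fin 2) → ℝ)
    (hv : ContDiff ℝ 2 v) (hcsv : HasCompactSupport v) (i : Fin 2)
    (hsv : ∀ x, v x ≠ 0 → x i ∈ Icc 0 R)
    (hsw : ∀ x, fderiv ℝ v x (EuclideanSpace.single i 1) ≠ 0 → x i ∈ Icc 0 R) :
    ∫ x, v x ^ 2 ≤ R ^ 4 * ∫ x, ‖iteratedFDeriv ℝ 2 v x‖ ^ 2 := by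
  set e : EuclideanSpace ℝ (Fin 2) := EuclideanSpace.single i 1 with he
  set w₁ : EuclideanSpace ℝ (Fin 2) → ℝ := fun x => fderiv ℝ v x e with hw₁def
  have hfd : ContDiff ℝ 1 (fderiv ℝ v) := hv.fderiv_right (by norm_num)
  have hw₁ : ContDiff ℝ 1 w₁ := (ContinuousLinearMap.apply ℝ ℝ e).contDiff.comp hfd
  have hw₁supp : support w₁ ⊆ tsupport v := fun x hx => by
    by_contra h
    have : fderiv ℝ v x = 0 := by
      by_contra h2
      exact h (support_fderiv_subset ℝ h2)
    simp only [mem_support, hw₁def, this, ContinuousLinearMap.zero_apply, ne_eq,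
      not_true_eq_false] at hx
  have hcsw₁ : HasCompactSupport w₁ :=
    HasCompactSupport.of_support_subset_isCompact hcsv hw₁supp
  have step1 : ∫ x, v x ^ 2 ≤ R ^ 2 * ∫ x, w₁ x ^ 2 :=
    key2d hR v (hv.of_le one_le_two) hcsv i hsv
  have step2 : ∫ x, w₁ x ^ 2 ≤ R ^ 2 * ∫ x, (fderiv ℝ w₁ x e) ^ 2 :=
    key2d hR w₁ hw₁ hcsw₁ i hsw
  -- pointwise bound of the second derivative in direction e by the operator norm
  have hfderiv_w₁ : ∀ x, fderiv ℝ w₁ x e = iteratedFDeriv ℝ 2 v x ![e, e] := by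
    intro x
    have hF : HasFDerivAt w₁
        ((ContinuousLinearMap.apply ℝ ℝ e).comp (fderiv ℝ (fderiv ℝ v) x)) x :=
      (ContinuousLinearMap.apply ℝ ℝ e).hasFDerivAt.comp x
        ((hfd.differentiable one_ne_zero) x).hasFDerivAt
    rw [hF.fderiv, iteratedFDeriv_two_apply]
    simp
  have hptw : ∀ x, (fderiv ℝ w₁ x e) ^ 2 ≤ ‖iteratedFDeriv ℝ 2 v x‖ ^ 2 := by
    intro x
    rw [hfderiv_w₁ x, ← sq_abs]
    apply pow_le_pow_left₀ (abs_nonneg _)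
    calc |iteratedFDeriv ℝ 2 v x ![e, e]| = ‖iteratedFDeriv ℝ 2 v x ![e, e]‖ :=
          (Real.norm_eq_abs _).symm
      _ ≤ ‖iteratedFDeriv ℝ 2 v x‖ * ∏ j : Fin 2, ‖(![e, e]) j‖ :=
          ContinuousMultilinearMap.le_opNorm _ _
      _ = ‖iteratedFDeriv ℝ 2 v x‖ := by
          rw [Fin.prod_univ_two]
          simp [he, EuclideanSpace.norm_single]
  -- integrability
  have hdw₁supp : support (fun x => fderiv ℝ w₁ x e) ⊆ tsupport w₁ := fun x hx => by
    by_contra h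
    have : fderiv ℝ w₁ x = 0 := by
      by_contra h2
      exact h (support_fderiv_subset ℝ h2)
    simp only [mem_support, this, ContinuousLinearMap.zero_apply, ne_eq,
      not_true_eq_false] at hx
  have int1 : Integrable (fun x => (fderiv ℝ w₁ x e) ^ 2) := by
    apply Continuous.integrable_of_hasCompactSupport
    · exact (((ContinuousLinearMap.apply ℝ ℝ e).continuous.comp
        (hw₁.continuous_fderiv one_ne_zero)).pow 2)
    · refine HasCompactSupport.of_support_subset_isCompact hcsw₁ ?_
      intro x hx
      apply hdw₁supp
      simp only [mem_support, ne_eq] at hx ⊢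
      exact fun h0 => hx (by rw [h0]; ring)
  have int2 : Integrable (fun x => ‖iteratedFDeriv ℝ 2 v x‖ ^ 2) := by
    apply Continuous.integrable_of_hasCompactSupport
    · exact ((hv.continuous_iteratedFDeriv (by exact_mod_cast le_rfl)).norm.pow 2)
    · exact (hcsv.iteratedFDeriv 2).comp_left (g := fun y => ‖y‖ ^ 2) (by simp)
  have step3 : ∫ x, (fderiv ℝ w₁ x e) ^ 2 ≤ ∫ x, ‖iteratedFDeriv ℝ 2 v x‖ ^ 2 :=
    integral_mono int1 int2 hptw
  calc ∫ x, v x ^ 2 ≤ R ^ 2 * ∫ x, w₁ x ^ 2 := step1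
    _ ≤ R ^ 2 * (R ^ 2 * ∫ x, (fderiv ℝ w₁ x e) ^ 2) := by
        apply mul_le_mul_of_nonneg_left step2 (by positivity)
    _ ≤ R ^ 2 * (R ^ 2 * ∫ x, ‖iteratedFDeriv ℝ 2 v x‖ ^ 2) := by
        apply mul_le_mul_of_nonneg_left (mul_le_mul_of_nonneg_left step3 (by positivity))
          (by positivity)
    _ = R ^ 4 * ∫ x, ‖iteratedFDeriv ℝ 2 v x‖ ^ 2 := by ring




/-- Second-order Poincaré-type inequality on the rectangle `[0,R₁] × [0,R₂]` with constant
`min(R₁,R₂)²`: for `v : ℝ² → ℝ` twice continuously differentiable with support contained in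
`[0,R₁] × [0,R₂]`, `(∫ v²)^(1/2) ≤ min(R₁,R₂)² · (∫ ‖D²v‖²)^(1/2)`, where `D²v(x)` is the
second derivative (a continuous bilinear map) and `‖·‖` its operator norm. -/
theorem stmt12 (R₁ R₂ : ℝ) (hR₁ : 0 < R₁) (hR₂ : 0 < R₂)
    (v : EuclideanSpace ℝ (Fin 2) → ℝ) (hv : ContDiff ℝ 2 v)
    (hsupp : Function.support v ⊆
      {x : EuclideanSpace ℝ (Fin 2) | x 0 ∈ Set.Icc (0 : ℝ) R₁ ∧ x 1 ∈ Set.Icc (0 : ℝ) R₂}) :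
    Real.sqrt (∫ x, v x ^ 2) ≤ min R₁ R₂ ^ 2 * Real.sqrt (∫ x, ‖iteratedFDeriv ℝ 2 v x‖ ^ 2) := by
  set R : ℝ := min R₁ R₂ with hRdef
  have hR : 0 < R := lt_min hR₁ hR₂
  set rect : Set (EuclideanSpace ℝ (Fin 2)) :=
    {x | x 0 ∈ Set.Icc (0 : ℝ) R₁ ∧ x 1 ∈ Set.Icc (0 : ℝ) R₂} with hrectdef
  have hrect_closed : IsClosed rect := by
    have : rect = ((EuclideanSpace.proj (0 : Fin 2)) ⁻¹' Icc 0 R₁) ∩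
        ((EuclideanSpace.proj (1 : Fin 2)) ⁻¹' Icc 0 R₂) := rfl
    rw [this]
    exact (isClosed_Icc.preimage (EuclideanSpace.proj (0 : Fin 2)).continuous).inter
      (isClosed_Icc.preimage (EuclideanSpace.proj (1 : Fin 2)).continuous)
  have hrect_cpt : IsCompact rect := by
    apply Metric.isCompact_of_isClosed_isBounded hrect_closed
    rw [isBounded_iff_forall_norm_le]
    refine ⟨R₁ + R₂, fun x hx => ?_⟩
    obtain ⟨⟨h01, h02⟩, ⟨h11, h12⟩⟩ := hx
    rw [EuclideanSpace.norm_eq]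
    rw [Fin.sum_univ_two]
    have : ‖x 0‖ ^ 2 + ‖x 1‖ ^ 2 ≤ (R₁ + R₂) ^ 2 := by
      rw [Real.norm_eq_abs, Real.norm_eq_abs, sq_abs, sq_abs]
      nlinarith
    calc Real.sqrt (‖x 0‖ ^ 2 + ‖x 1‖ ^ 2) ≤ Real.sqrt ((R₁ + R₂) ^ 2) :=
          Real.sqrt_le_sqrt this
      _ = R₁ + R₂ := Real.sqrt_sq (by linarith)
  have hcsv : HasCompactSupport v :=
    HasCompactSupport.of_support_subset_isCompact hrect_cpt hsupp
  have hts : tsupport v ⊆ rect := closure_minimal hsupp hrect_closed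
  -- choose the direction
  have key : ∫ x, v x ^ 2 ≤ R ^ 4 * ∫ x, ‖iteratedFDeriv ℝ 2 v x‖ ^ 2 := by
    rcases le_total R₁ R₂ with h | h
    · have hRR : R = R₁ := min_eq_left h
      refine main_aux hR v hv hcsv 0 (fun x hx => ?_) (fun x hx => ?_)
      · rw [hRR]; exact (hsupp hx).1
      · rw [hRR]
        have hx2 : fderiv ℝ v x ≠ 0 := fun h0 => by
          simp [h0] at hx
        exact (hts (support_fderiv_subset ℝ hx2)).1
    · have hRR : R = R₂ := min_eq_right h
      refine main_aux hR v hv hcsv 1 (fun x hx => ?_) (fun x hx => ?_)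
      · rw [hRR]; exact (hsupp hx).2
      · rw [hRR]
        have hx2 : fderiv ℝ v x ≠ 0 := fun h0 => by
          simp [h0] at hx
        exact (hts (support_fderiv_subset ℝ hx2)).2
  calc Real.sqrt (∫ x, v x ^ 2)
      ≤ Real.sqrt (R ^ 4 * ∫ x, ‖iteratedFDeriv ℝ 2 v x‖ ^ 2) := Real.sqrt_le_sqrt key
    _ = R ^ 2 * Real.sqrt (∫ x, ‖iteratedFDeriv ℝ 2 v x‖ ^ 2) := by
        rw [Real.sqrt_mul (by positivity), show R ^ 4 = (R ^ 2) ^ 2 by ring,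
          Real.sqrt_sq (by positivity)]

end PoincareAux
end
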